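/- Let D ⊂ ℂ^n be a hyperconvex domain and Φ_{𝒫,max}^D a global Zhou weight related to the priori datum 𝒫 = ({z_i}_{i=1}^p, {f_{0,i}}_{i=1}^p, {u_{0,i}}_{i=1}^p) on D. Then for every ψ ∈ PSH⁻(D), the inequality ψ(z) ≤ σ_Z(ψ, Φ_{𝒫,max}^D) · Φ_{𝒫,max}^D(z) holds for all z ∈ D, where σ_Z(ψ, Φ_{𝒫,max}^D) := min_{1≤i≤p} σ_{z_i}(ψ, Φ_{𝒫,max}^D). -/

import Mathlib

open Metric MeasureTheory Filter Topology Set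
open scoped ENNReal Classical

noncomputable section

/-- `ℂⁿ`. -/
abbrev Cn (n : ℕ) : Type := Fin n → ℂ

/-- The exponential function on the extended reals, with values in `ℝ≥0∞`
(`exp (-∞) = 0`, `exp (+∞) = ∞`). -/
noncomputable def expE (x : EReal) : ℝ≥0∞ :=
  if x = ⊤ then ⊤ else if x = ⊥ then 0 else ENNReal.ofReal (Real.exp x.toReal)

/-- The logarithm of a nonnegative real number, with values in `EReal`
(`elog 0 = -∞`). -/
noncomputable def elog (x : ℝ) : EReal := if x ≤ 0 then ⊥ else ((Real.log x : ℝ) : EReal)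

section PSH

variable {F : Type*} [NormedAddCommGroup F] [NormedSpace ℂ F]

/-- On every closed complex disc contained in `D`, `u` lies below every harmonic function
(i.e. every real part of a holomorphic function) dominating it on the boundary circle.
This is the sub-mean-value property of subharmonicity along complex lines. -/
def SubMeanOnLines (u : F → EReal) (D : Set F) : Prop :=
  ∀ a b : F, ∀ r : ℝ, 0 < r →
    (∀ l : ℂ, ‖l‖ ≤ r → a + l • b ∈ D) →
    ∀ h : ℂ → ℂ, DifferentiableOn ℂ h (Metric.closedBall 0 r) →
      (∀ l : ℂ, ‖l‖ = r → u (a + l • b) ≤ ((h l).re : EReal)) →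
      ∀ l : ℂ, ‖l‖ ≤ r → u (a + l • b) ≤ ((h l).re : EReal)

/-- `u : F → [-∞, ∞)` is plurisubharmonic on `D`: upper semicontinuous and subharmonic
along every complex line. -/
def PlurisubharmonicOn (u : F → EReal) (D : Set F) : Prop :=
  UpperSemicontinuousOn u D ∧ (∀ z ∈ D, u z < ⊤) ∧ SubMeanOnLines u D

/-- `u ∈ PSH⁻(D)`: `u` is a nonpositive (negative) plurisubharmonic function on `D`. -/
def NegPSHOn (u : F → EReal) (D : Set F) : Prop :=
  PlurisubharmonicOn u D ∧ ∀ z ∈ D, u z ≤ 0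

/-- `f ≥ g + O(1)` near `z₀`. -/
def GeO1Near (f g : F → EReal) (z₀ : F) : Prop :=
  ∃ r > (0:ℝ), ∃ C : ℝ, ∀ w ∈ Metric.ball z₀ r, g w ≤ f w + (C : EReal)

/-- `f = g + O(1)` near `z₀`. -/
def EqO1Near (f g : F → EReal) (z₀ : F) : Prop :=
  GeO1Near f g z₀ ∧ GeO1Near g f z₀

/-- The relative type `σ_{z₀}(ψ, φ) = sup{c ≥ 0 : ψ ≤ cφ + O(1) near z₀}`. -/
noncomputable def relType (ψ φ : F → EReal) (z₀ : F) : ℝ :=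
  sSup {c : ℝ | 0 ≤ c ∧ ∃ r > (0:ℝ), ∃ C : ℝ,
    ∀ w ∈ Metric.ball z₀ r, ψ w ≤ (c : EReal) * φ w + (C : EReal)}

/-- `σ_{z₀}(ψ, φ) ≥ c`, expressed without reference to a (possibly infinite) supremum:
every `c' ∈ [0, c)` is an admissible constant. -/
def relTypeGE (ψ φ : F → EReal) (z₀ : F) (c : ℝ) : Prop :=
  ∀ c' : ℝ, 0 ≤ c' → c' < c → ∃ r > (0:ℝ), ∃ C : ℝ,
    ∀ w ∈ Metric.ball z₀ r, ψ w ≤ (c' : EReal) * φ w + (C : EReal)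

/-- `(dd^c φ)ⁿ = 0` on the open set `Ω`, encoded through the equivalent maximality
property: any plurisubharmonic `u` on `Ω` with `u ≤ φ` outside a compact subset of `Ω`
satisfies `u ≤ φ` on all of `Ω`. -/
def MongeAmpereVanishesOn (φ : F → EReal) (Ω : Set F) : Prop :=
  ∀ u : F → EReal, PlurisubharmonicOn u Ω →
    ∀ K : Set F, IsCompact K → K ⊆ Ω →
      (∀ z ∈ Ω \ K, u z ≤ φ z) → ∀ z ∈ Ω, u z ≤ φ z

/-- `S` is an analytic subset of `D`: locally the common zero set of finitely many
holomorphic functions. -/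
def IsAnalyticSubset (D S : Set F) : Prop :=
  S ⊆ D ∧ ∀ z ∈ D, ∃ r > (0:ℝ), Metric.ball z r ⊆ D ∧ ∃ m : ℕ, ∃ g : Fin m → F → ℂ,
    (∀ j, DifferentiableOn ℂ (g j) (Metric.ball z r)) ∧
    S ∩ Metric.ball z r = {w ∈ Metric.ball z r | ∀ j, g j w = 0}

end PSH

/-- A hyperconvex domain: an open connected nonempty set admitting a continuous negative
plurisubharmonic exhaustion function. -/
def IsHyperconvex {n : ℕ} (D : Set (Cn n)) : Prop :=
  IsOpen D ∧ D.Nonempty ∧ IsPreconnected D ∧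
  ∃ ρ : Cn n → ℝ, ContinuousOn ρ D ∧
    PlurisubharmonicOn (fun z => ((ρ z : ℝ) : EReal)) D ∧
    (∀ z ∈ D, ρ z < 0) ∧
    ∀ c : ℝ, c < 0 → ∃ K : Set (Cn n), IsCompact K ∧ K ⊆ D ∧ {z ∈ D | ρ z ≤ c} ⊆ K

/-- Defining data for a bounded strictly hyperconvex domain `D`: a bounded domain `Ω` and
a continuous plurisubharmonic exhaustion `ρ : Ω → (-∞, 1)` with `D = {ρ < 0}` and all
sublevel sets `{ρ < c}`, `c ∈ [0,1]`, connected. -/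
structure StrictHyperconvexData (n : ℕ) (D : Set (Cn n)) where
  Ω : Set (Cn n)
  Ω_open : IsOpen Ω
  Ω_conn : IsConnected Ω
  Ω_bdd : Bornology.IsBounded Ω
  ρ : Cn n → ℝ
  ρ_cont : ContinuousOn ρ Ω
  ρ_psh : PlurisubharmonicOn (fun z => ((ρ z : ℝ) : EReal)) Ω
  ρ_lt_one : ∀ z ∈ Ω, ρ z < 1
  ρ_exhaust : ∀ c : ℝ, c < 1 → ∃ K : Set (Cn n), IsCompact K ∧ K ⊆ Ω ∧ {z ∈ Ω | ρ z ≤ c} ⊆ K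
  D_eq : D = {z ∈ Ω | ρ z < 0}
  lvl_conn : ∀ c : ℝ, 0 ≤ c → c ≤ 1 → IsConnected {z ∈ Ω | ρ z < c}

/-- A pseudoconvex domain: an open nonempty set admitting a continuous plurisubharmonic
exhaustion function. -/
def IsPseudoconvex {n : ℕ} (Ω : Set (Cn n)) : Prop :=
  IsOpen Ω ∧ Ω.Nonempty ∧
  ∃ ρ : Cn n → ℝ, ContinuousOn ρ Ω ∧
    PlurisubharmonicOn (fun z => ((ρ z : ℝ) : EReal)) Ω ∧
    ∀ c : ℝ, ∃ K : Set (Cn n), IsCompact K ∧ K ⊆ Ω ∧ {z ∈ Ω | ρ z ≤ c} ⊆ K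

/-- `g` is (Lebesgue) integrable in some neighborhood of `z₀`. -/
def IntegrableNear {n : ℕ} (g : Cn n → ℝ≥0∞) (z₀ : Cn n) : Prop :=
  ∃ r > (0:ℝ), (∫⁻ w in Metric.ball z₀ r, g w) < ⊤

/-- The density `|f|² e^{-2u}` associated to a vector `f` of holomorphic functions and a
weight `u`. -/
noncomputable def densFn {n k : ℕ} (f : Fin k → Cn n → ℂ) (u : Cn n → EReal) (w : Cn n) :
    ℝ≥0∞ :=
  (∑ j, ((‖f j w‖₊ : ℝ≥0∞)) ^ 2) * expE ((-2 : EReal) * u w)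

/-- `(f, z₀) ∈ 𝓘(u)_{z₀}`: the germ of `f` belongs to the multiplier ideal of `u` at
`z₀`, i.e. `|f|² e^{-2u}` is integrable near `z₀`. -/
def MemIdeal {n : ℕ} (f : Cn n → ℂ) (u : Cn n → EReal) (z₀ : Cn n) : Prop :=
  IntegrableNear (fun w => ((‖f w‖₊ : ℝ≥0∞)) ^ 2 * expE ((-2 : EReal) * u w)) z₀

/-- `(f, z₀) ∉ 𝓘(u + g)_{z₀}`: `|f|² e^{-2u} e^{-2g}` is not integrable near `z₀`. -/
def NotInIdeal {n k : ℕ} (f : Fin k → Cn n → ℂ) (u g : Cn n → EReal) (z₀ : Cn n) : Prop :=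
  ¬ IntegrableNear (fun w => densFn f u w * expE ((-2 : EReal) * g w)) z₀

/-- A priori datum `𝒫 = ({z_i}, {f_{0,i}}, {u_{0,i}})`: distinct points `z_i`, vectors
`f_{0,i}` of holomorphic functions near `z_i`, and plurisubharmonic weights `u_{0,i}`
near `z_i` such that each `|f_{0,i}|² e^{-2u_{0,i}}` is integrable near `z_i`. -/
structure PrioriDatum (n p : ℕ) where
  z : Fin p → Cn n
  z_inj : Function.Injective z
  k : Fin p → ℕ
  f : (i : Fin p) → Fin (k i) → Cn n → ℂ
  u : Fin p → Cn n → EReal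
  rad : Fin p → ℝ
  rad_pos : ∀ i, 0 < rad i
  f_holo : ∀ i j, DifferentiableOn ℂ (f i j) (Metric.ball (z i) (rad i))
  u_psh : ∀ i, PlurisubharmonicOn (u i) (Metric.ball (z i) (rad i))
  u_int : ∀ i, IntegrableNear (densFn (f i) (u i)) (z i)

/-- `Φ` is a (multipoled) global Zhou weight related to the datum `P` on the domain `G`. -/
def IsGlobalZhouWeight {n p : ℕ} (G : Set (Cn n)) (P : PrioriDatum n p)
    (Φ : Cn n → EReal) : Prop :=
  NegPSHOn Φ G ∧
  (∃ N₀ : ℝ, 0 < N₀ ∧ ∀ N : Fin p → ℝ, (∀ i, N₀ ≤ N i) → ∀ i,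
    IntegrableNear (fun w => densFn (P.f i) (P.u i) w *
      ENNReal.ofReal (‖w - P.z i‖ ^ (2 * N i)) * expE ((-2 : EReal) * Φ w)) (P.z i)) ∧
  (∀ i, NotInIdeal (P.f i) (P.u i) Φ (P.z i)) ∧
  (∀ Ψ : Cn n → EReal, NegPSHOn Ψ G → (∀ z ∈ G, Φ z ≤ Ψ z) →
    (∀ i, NotInIdeal (P.f i) (P.u i) Ψ (P.z i)) → ∀ z ∈ G, Ψ z = Φ z)

/-- `φ` is a local Zhou weight related to `|f|² e^{-2u}` near `z₀`. -/
def IsLocalZhouWeight {n : ℕ} (z₀ : Cn n) {k : ℕ} (f : Fin k → Cn n → ℂ)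
    (u : Cn n → EReal) (φ : Cn n → EReal) : Prop :=
  (∃ r > (0:ℝ), PlurisubharmonicOn φ (Metric.ball z₀ r)) ∧
  (∃ N₀ : ℝ, 0 < N₀ ∧ ∀ N : ℝ, N₀ ≤ N →
    IntegrableNear (fun w => densFn f u w *
      ENNReal.ofReal (‖w - z₀‖ ^ (2 * N)) * expE ((-2 : EReal) * φ w)) z₀) ∧
  NotInIdeal f u φ z₀ ∧
  (∀ φ' : Cn n → EReal, (∃ r > (0:ℝ), PlurisubharmonicOn φ' (Metric.ball z₀ r)) →
    GeO1Near φ' φ z₀ → NotInIdeal f u φ' z₀ → EqO1Near φ' φ z₀)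

/-- The upper envelope of all negative plurisubharmonic functions `g` on `D` with
`(f_{0,i}, z_i) ∉ 𝓘(u_{0,i} + g)_{z_i}` and `g ≥ φ_i + O(1)` near every pole `z_i`. -/
noncomputable def zhouSup {n p : ℕ} (D : Set (Cn n)) (P : PrioriDatum n p)
    (φ : Fin p → Cn n → EReal) (x : Cn n) : EReal :=
  sSup {v : EReal | ∃ g : Cn n → EReal,
    (NegPSHOn g D ∧ (∀ i, NotInIdeal (P.f i) (P.u i) g (P.z i)) ∧
      ∀ i, GeO1Near g (φ i) (P.z i)) ∧ v = g x}

/-- The multipoled pluricomplex Green function `G_{D,(z_1,…,z_p)}`. -/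
noncomputable def greenMulti {n p : ℕ} (D : Set (Cn n)) (z : Fin p → Cn n) (x : Cn n) :
    EReal :=
  sSup {v : EReal | ∃ g : Cn n → EReal,
    (NegPSHOn g D ∧ ∀ i, ∃ r > (0:ℝ), ∃ C : ℝ,
      ∀ w ∈ Metric.ball (z i) r, g w ≤ elog ‖w - z i‖ + (C : EReal)) ∧ v = g x}

/-- Extension of a function on `D` by `0` outside `D` (in particular on `∂D`). -/
noncomputable def extZero {n : ℕ} (D : Set (Cn n)) (Φ : Cn n → EReal) (x : Cn n) : EReal :=
  if x ∈ D then Φ x else 0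

/-- Local datum near the origin: a vector `f` of holomorphic functions near `0` and a
plurisubharmonic weight `u` near `0` with `|f|² e^{-2u}` integrable near `0`. -/
structure LocalDatum (n : ℕ) where
  k : ℕ
  f : Fin k → Cn n → ℂ
  u : Cn n → EReal
  rad : ℝ
  rad_pos : 0 < rad
  f_holo : ∀ j, DifferentiableOn ℂ (f j) (Metric.ball 0 rad)
  u_psh : PlurisubharmonicOn u (Metric.ball 0 rad)
  u_int : IntegrableNear (densFn f u) 0

/-- The multipoled global Zhou weight `Φ_{Z,max}^D` attached to translated local data:
the upper envelope of negative plurisubharmonic `g` on `D` with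
`(τ_{z_i} f_{0,i}, z_i) ∉ 𝓘(τ_{z_i} u_{0,i} + g)_{z_i}` and
`g ≥ τ_{z_i} φ_i + O(1)` near each `z_i`. -/
noncomputable def zhouSupTrans {n p : ℕ} (D : Set (Cn n)) (L : Fin p → LocalDatum n)
    (φ : Fin p → Cn n → EReal) (z : Fin p → Cn n) (x : Cn n) : EReal :=
  sSup {v : EReal | ∃ g : Cn n → EReal,
    (NegPSHOn g D ∧
      (∀ i, NotInIdeal (fun j w => (L i).f j (w - z i)) (fun w => (L i).u (w - z i)) g
        (z i)) ∧
      ∀ i, GeO1Near g (fun w => φ i (w - z i)) (z i)) ∧ v = g x}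

/-- The single-pole datum extracted from a multipoled datum. -/
def PrioriDatum.single {n p : ℕ} (P : PrioriDatum n p) (i : Fin p) : PrioriDatum n 1 where
  z := fun _ => P.z i
  z_inj := fun a b _ => Subsingleton.elim a b
  k := fun _ => P.k i
  f := fun _ => P.f i
  u := fun _ => P.u i
  rad := fun _ => P.rad i
  rad_pos := fun _ => P.rad_pos i
  f_holo := fun _ j => P.f_holo i j
  u_psh := fun _ => P.u_psh i
  u_int := fun _ => P.u_int i

/-- `f ∈ ℰ_m(D)`: holomorphic on `D`, bounded by `1`, and belonging to the multiplier
ideal `𝓘(mΦ)` at every pole. -/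
def memE {n p : ℕ} (D : Set (Cn n)) (P : PrioriDatum n p) (Φ : Cn n → EReal) (m : ℕ)
    (f : Cn n → ℂ) : Prop :=
  DifferentiableOn ℂ f D ∧ (∀ z ∈ D, ‖f z‖ ≤ 1) ∧
    ∀ i, MemIdeal f (fun w => ((m : ℝ) : EReal) * Φ w) (P.z i)

/-- `f ∈ 𝒜²_m(D)`: holomorphic on `D`, with `∫_D |f|² ≤ 1`, and belonging to the
multiplier ideal `𝓘(mΦ)` at every pole. -/
def memA {n p : ℕ} (D : Set (Cn n)) (P : PrioriDatum n p) (Φ : Cn n → EReal) (m : ℕ)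
    (f : Cn n → ℂ) : Prop :=
  DifferentiableOn ℂ f D ∧ (∫⁻ w in D, ((‖f w‖₊ : ℝ≥0∞)) ^ 2) ≤ 1 ∧
    ∀ i, MemIdeal f (fun w => ((m : ℝ) : EReal) * Φ w) (P.z i)

/-- `φ_m(x) = sup{(1/m) log|f(x)| : f ∈ ℰ_m(D)}`. -/
noncomputable def phiSupE {n p : ℕ} (D : Set (Cn n)) (P : PrioriDatum n p)
    (Φ : Cn n → EReal) (m : ℕ) (x : Cn n) : EReal :=
  sSup {v : EReal | ∃ f : Cn n → ℂ, memE D P Φ m f ∧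
    v = ((1 / (m : ℝ) : ℝ) : EReal) * elog ‖f x‖}

/-- `ϖ_m(x) = sup{(1/m) log|f(x)| : f ∈ 𝒜²_m(D)}`. -/
noncomputable def phiSupA {n p : ℕ} (D : Set (Cn n)) (P : PrioriDatum n p)
    (Φ : Cn n → EReal) (m : ℕ) (x : Cn n) : EReal :=
  sSup {v : EReal | ∃ f : Cn n → ℂ, memA D P Φ m f ∧
    v = ((1 / (m : ℝ) : ℝ) : EReal) * elog ‖f x‖}

/-- `Φ_{D,z_i}`: the upper envelope of all negative plurisubharmonic `g` on `D` with
`(f_{0,i}, z_i) ∉ 𝓘(u_{0,i} + g)_{z_i}` and `g ≥ Φ` on `D`. -/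
noncomputable def zhouSupGe {n p : ℕ} (D : Set (Cn n)) (P : PrioriDatum n p) (i : Fin p)
    (Φ : Cn n → EReal) (x : Cn n) : EReal :=
  sSup {v : EReal | ∃ g : Cn n → EReal,
    (NegPSHOn g D ∧ NotInIdeal (P.f i) (P.u i) g (P.z i) ∧ ∀ z ∈ D, Φ z ≤ g z) ∧
    v = g x}

end

section ZWHelpers

variable {F : Type*} [NormedAddCommGroup F] [NormedSpace ℂ F]

lemma zw_mul_le_iff {a : ℝ} (ha : 0 < a) {t y : EReal} :
    (a : EReal) * t ≤ y ↔ t ≤ ((a⁻¹ : ℝ) : EReal) * y := by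
  have h1 : (0:EReal) < ((a:ℝ):EReal) := EReal.coe_pos.2 ha
  have h2 : ((a:ℝ):EReal) ≠ ⊤ := EReal.coe_ne_top a
  have hdiv : ((a⁻¹:ℝ):EReal) * y = y / ((a:ℝ):EReal) := by
    rw [EReal.coe_inv]; exact EReal.mul_comm _ _
  rw [hdiv, EReal.le_div_iff_mul_le h1 h2, EReal.mul_comm]

lemma zw_mul_lt_iff {a : ℝ} (ha : 0 < a) {t y : EReal} :
    (a : EReal) * t < y ↔ t < ((a⁻¹ : ℝ) : EReal) * y := by
  rw [lt_iff_not_ge, lt_iff_not_ge]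
  apply not_congr
  have h := zw_mul_le_iff (t := y) (y := t) (inv_pos.2 ha)
  rw [inv_inv] at h
  exact h.symm

lemma zw_mul_mono {a : ℝ} (ha : 0 ≤ a) {t s : EReal} (h : t ≤ s) :
    (a:EReal) * t ≤ (a:EReal) * s :=
  mul_le_mul_of_nonneg_left h (EReal.coe_nonneg.2 ha)

lemma zw_mul_anti {c' c'' : ℝ} (h0 : 0 ≤ c') (h : c' ≤ c'') {x : EReal} (hx : x ≤ 0) :
    (c'':EReal) * x ≤ (c':EReal) * x := by
  induction x using EReal.rec with
  | bot =>
      rcases eq_or_lt_of_le (h0.trans h) with h'|h'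
      · have hc' : c' = 0 := le_antisymm (h.trans h'.symm.le) h0
        rw [← h', hc']
      · rw [EReal.coe_mul_bot_of_pos h']; exact bot_le
  | coe t =>
      have ht : t ≤ 0 := EReal.coe_nonpos.1 hx
      rw [← EReal.coe_mul, ← EReal.coe_mul, EReal.coe_le_coe_iff]
      exact mul_le_mul_of_nonpos_right h ht
  | top => exact absurd hx (by simp)

lemma zw_expE_coe (r : ℝ) : expE ((r : ℝ) : EReal) = ENNReal.ofReal (Real.exp r) := by
  unfold expE
  rw [if_neg (EReal.coe_ne_top r), if_neg (by simp), EReal.toReal_coe]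

lemma zw_expE_mono {x y : EReal} (h : x ≤ y) : expE x ≤ expE y := by
  rcases eq_or_ne y ⊤ with rfl|hy
  · simp [expE]
  rcases eq_or_ne x ⊥ with rfl|hx
  · simp [expE]
  have hx' : x ≠ ⊤ := fun h' => hy (top_le_iff.1 (h' ▸ h))
  have hy' : y ≠ ⊥ := fun h' => hx (le_bot_iff.1 (h' ▸ h))
  rw [expE, expE, if_neg hx', if_neg hx, if_neg hy, if_neg hy']
  exact ENNReal.ofReal_le_ofReal (Real.exp_le_exp.2 (EReal.toReal_le_toReal h hx hy))

lemma zw_expE_add_coe (x : EReal) (c : ℝ) :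
    expE (x + (c:EReal)) = expE x * ENNReal.ofReal (Real.exp c) := by
  induction x using EReal.rec with
  | bot => simp [expE]
  | coe r =>
      have h1 : ((r:ℝ):EReal) + (c:EReal) = ((r + c : ℝ) : EReal) := by norm_cast
      rw [h1, zw_expE_coe, zw_expE_coe, Real.exp_add,
        ← ENNReal.ofReal_mul (Real.exp_pos r).le]
  | top =>
      have h1 : ((⊤:EReal) + (c:EReal)) = ⊤ := EReal.top_add_coe c
      have h2 : expE ⊤ = ⊤ := by unfold expE; rw [if_pos rfl]
      rw [h1, h2, ENNReal.top_mul (ENNReal.ofReal_pos.2 (Real.exp_pos c)).ne']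

lemma zw_neg_two : (-2 : EReal) = ((-2 : ℝ) : EReal) := rfl

lemma zw_neg_two_mul_le {x y : EReal} (h : x ≤ y) : (-2:EReal) * y ≤ (-2:EReal) * x := by
  have e : ∀ z : EReal, (-2:EReal) * z = -(((2:ℝ):EReal) * z) := by
    intro z
    rw [← EReal.neg_mul]
    congr 1
  rw [e, e, EReal.neg_le_neg_iff]
  exact zw_mul_mono (by norm_num) h

lemma zw_neg_two_mul_add (x : EReal) (c : ℝ) :
    (-2:EReal) * (x + (c:EReal)) = (-2:EReal) * x + ((-2*c : ℝ) : EReal) := by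
  induction x using EReal.rec with
  | bot =>
      rw [EReal.bot_add, zw_neg_two, EReal.coe_mul_bot_of_neg (by norm_num),
        EReal.top_add_coe]
  | coe r =>
      rw [zw_neg_two]
      norm_cast
      ring
  | top =>
      rw [EReal.top_add_coe, zw_neg_two, EReal.coe_mul_top_of_neg (by norm_num),
        EReal.bot_add]

lemma zw_psh_max {u v : F → EReal} {D : Set F}
    (hu : PlurisubharmonicOn u D) (hv : PlurisubharmonicOn v D) :
    PlurisubharmonicOn (fun z => max (u z) (v z)) D := by
  refine ⟨fun x hx y hy => ?_, fun z hz => ?_, ?_⟩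
  · have h1 := hu.1 x hx y (lt_of_le_of_lt (le_max_left _ _) hy)
    have h2 := hv.1 x hx y (lt_of_le_of_lt (le_max_right _ _) hy)
    filter_upwards [h1, h2] with w hw1 hw2 using max_lt hw1 hw2
  · exact max_lt (hu.2.1 z hz) (hv.2.1 z hz)
  · intro a b r hr hball h hh hbd l hl
    exact max_le
      (hu.2.2 a b r hr hball h hh (fun l' hl' => le_trans (le_max_left _ _) (hbd l' hl')) l hl)
      (hv.2.2 a b r hr hball h hh (fun l' hl' => le_trans (le_max_right _ _) (hbd l' hl')) l hl)

lemma zw_psh_smul {u : F → EReal} {D : Set F} {a : ℝ} (ha : 0 < a)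
    (hu : PlurisubharmonicOn u D) :
    PlurisubharmonicOn (fun z => (a:EReal) * u z) D := by
  have hainv : (0:ℝ) < a⁻¹ := inv_pos.2 ha
  refine ⟨fun x hx y hy => ?_, fun z hz => ?_, ?_⟩
  · have h := hu.1 x hx _ ((zw_mul_lt_iff ha).1 hy)
    filter_upwards [h] with w hw using (zw_mul_lt_iff ha).2 hw
  · have h : u z < ((a⁻¹:ℝ):EReal) * ⊤ := by
      rw [EReal.coe_mul_top_of_pos hainv]; exact hu.2.1 z hz
    exact (zw_mul_lt_iff ha).2 h
  · intro p q r hr hball h hh hbd l hl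
    have hh' : DifferentiableOn ℂ (fun l => ((a⁻¹:ℝ):ℂ) * h l) (Metric.closedBall 0 r) :=
      (differentiableOn_const _).mul hh
    have hbd' : ∀ l', ‖l'‖ = r →
        u (p + l' • q) ≤ (((((a⁻¹:ℝ):ℂ) * h l').re : ℝ) : EReal) := by
      intro l' hl'
      have h2 := (zw_mul_le_iff ha).1 (hbd l' hl')
      rw [← EReal.coe_mul] at h2
      rwa [Complex.re_ofReal_mul]
    have hin := hu.2.2 p q r hr hball _ hh' hbd' l hl
    rw [Complex.re_ofReal_mul] at hin
    refine (zw_mul_le_iff ha).2 ?_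
    rwa [← EReal.coe_mul]

end ZWHelpers

/-- Proposition 1.7: for any `ψ ∈ PSH⁻(D)`, `ψ ≤ σ_Z(ψ, Φ) · Φ` on `D`, where
`σ_Z(ψ, Φ) = min_i σ_{z_i}(ψ, Φ)`. -/
theorem statement4 {n p : ℕ} (hp : 0 < p) (D : Set (Cn n)) (hD : IsHyperconvex D)
    (P : PrioriDatum n p) (hzD : ∀ i, P.z i ∈ D)
    (Φ : Cn n → EReal) (hΦ : IsGlobalZhouWeight D P Φ)
    (ψ : Cn n → EReal) (hψ : NegPSHOn ψ D) :
    ∀ z ∈ D, ψ z ≤ ((⨅ i, relType ψ Φ (P.z i) : ℝ) : EReal) * Φ z := by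
  classical
  have hpn : Nonempty (Fin p) := ⟨⟨0, hp⟩⟩
  obtain ⟨hDopen, -⟩ := hD
  have hΦ0 : ∀ z ∈ D, Φ z ≤ 0 := hΦ.1.2
  set c : ℝ := ⨅ i, relType ψ Φ (P.z i) with hcdef
  have hrel0 : ∀ i, 0 ≤ relType ψ Φ (P.z i) := by
    intro i
    unfold relType
    exact Real.sSup_nonneg (fun x hx => hx.1)
  have hc0 : 0 ≤ c := le_ciInf hrel0
  -- per-pole bound for any admissible c' < c
  have hper : ∀ c' : ℝ, 0 ≤ c' → c' < c → ∀ i : Fin p, ∃ r > (0:ℝ),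
      Metric.ball (P.z i) r ⊆ D ∧ ∃ C : ℝ,
        ∀ w ∈ Metric.ball (P.z i) r, ψ w ≤ (c' : EReal) * Φ w + (C : EReal) := by
    intro c' hc'0 hc'c i
    obtain ⟨r₀, hr₀, hball₀⟩ := Metric.isOpen_iff.1 hDopen (P.z i) (hzD i)
    have hS0 : (0:ℝ) ∈ {cc : ℝ | 0 ≤ cc ∧ ∃ r > (0:ℝ), ∃ C : ℝ,
        ∀ w ∈ Metric.ball (P.z i) r, ψ w ≤ (cc : EReal) * Φ w + (C : EReal)} := by
      refine ⟨le_refl 0, r₀, hr₀, 0, fun w hw => ?_⟩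
      rw [EReal.coe_zero, zero_mul, zero_add]
      exact hψ.2 w (hball₀ hw)
    have hlt : c' < relType ψ Φ (P.z i) := by
      refine lt_of_lt_of_le hc'c ?_
      rw [hcdef]
      exact ciInf_le (Set.Finite.bddBelow (Set.finite_range _)) i
    unfold relType at hlt
    obtain ⟨c'', hc''S, hc'lt⟩ := exists_lt_of_lt_csSup ⟨0, hS0⟩ hlt
    obtain ⟨hc''0, r'', hr'', C'', hbd⟩ := hc''S
    refine ⟨min r'' r₀, lt_min hr'' hr₀,
      (Metric.ball_subset_ball (min_le_right _ _)).trans hball₀, C'', fun w hw => ?_⟩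
    have h1 := hbd w (Metric.ball_subset_ball (min_le_left _ _) hw)
    have hwD : w ∈ D := (Metric.ball_subset_ball (min_le_right _ _)).trans hball₀ hw
    calc ψ w ≤ (c'':EReal) * Φ w + (C'':EReal) := h1
      _ ≤ (c':EReal) * Φ w + (C'':EReal) :=
        add_le_add_left (zw_mul_anti hc'0 hc'lt.le (hΦ0 w hwD)) _
  -- key step via the maximality of the Zhou weight
  have key : ∀ c' : ℝ, 0 < c' → c' < c → ∀ z ∈ D, ψ z ≤ (c' : EReal) * Φ z := by
    intro c' hc'pos hc'c
    set a : ℝ := c'⁻¹ with hadef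
    have hapos : 0 < a := inv_pos.2 hc'pos
    set Ψ : Cn n → EReal := fun w => max (Φ w) ((a:EReal) * ψ w) with hΨdef
    have hΨpsh : PlurisubharmonicOn Ψ D := zw_psh_max hΦ.1.1 (zw_psh_smul hapos hψ.1)
    have hΨneg : NegPSHOn Ψ D := by
      refine ⟨hΨpsh, fun z hz => ?_⟩
      show max (Φ z) ((a:EReal) * ψ z) ≤ 0
      refine max_le (hΦ0 z hz) ?_
      have h := zw_mul_mono hapos.le (hψ.2 z hz)
      rwa [mul_zero] at h
    have hge : ∀ z ∈ D, Φ z ≤ Ψ z := fun z _ => le_max_left _ _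
    have hnot : ∀ i, NotInIdeal (P.f i) (P.u i) Ψ (P.z i) := by
      intro i hint
      obtain ⟨r, hr, hballD, C, hbd⟩ := hper c' hc'pos.le hc'c i
      set C₀ : ℝ := max 0 (a * C) with hC₀def
      have hC₀0 : 0 ≤ C₀ := le_max_left _ _
      have hΨle : ∀ w ∈ Metric.ball (P.z i) r, Ψ w ≤ Φ w + (C₀ : EReal) := by
        intro w hw
        show max (Φ w) ((a:EReal) * ψ w) ≤ Φ w + (C₀ : EReal)
        refine max_le ?_ ?_
        · calc Φ w = Φ w + 0 := (add_zero _).symm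
            _ ≤ Φ w + (C₀:EReal) := add_le_add_right (by exact_mod_cast hC₀0) _
        · have h1 : (a:EReal) * ψ w ≤ (a:EReal) * ((c':EReal) * Φ w + (C:EReal)) :=
            zw_mul_mono hapos.le (hbd w hw)
          refine h1.trans ?_
          have hac : a * c' = 1 := inv_mul_cancel₀ hc'pos.ne'
          generalize Φ w = x
          induction x using EReal.rec with
          | bot =>
              rw [EReal.coe_mul_bot_of_pos hc'pos, EReal.bot_add,
                EReal.coe_mul_bot_of_pos hapos, EReal.bot_add]
          | coe t =>
              rw [← EReal.coe_mul, ← EReal.coe_add, ← EReal.coe_mul, ← EReal.coe_add,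
                EReal.coe_le_coe_iff]
              have e1 : a * (c' * t + C) = t + a * C := by
                calc a * (c' * t + C) = (a * c') * t + a * C := by ring
                  _ = t + a * C := by rw [hac]; ring
              have h6 : a * C ≤ C₀ := hC₀def ▸ le_max_right 0 (a * C)
              rw [e1]
              linarith
          | top =>
              rw [EReal.top_add_coe]
              exact le_top
      apply hΦ.2.2.1 i
      obtain ⟨r', hr', hfin⟩ := hint
      refine ⟨min r r', lt_min hr hr', ?_⟩
      set k : ℝ≥0∞ := ENNReal.ofReal (Real.exp (-2 * C₀)) with hkdef
      have hk0 : k ≠ 0 := (ENNReal.ofReal_pos.2 (Real.exp_pos _)).ne'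
      have hkt : k ≠ ⊤ := ENNReal.ofReal_ne_top
      have hpt : ∀ w ∈ Metric.ball (P.z i) (min r r'),
          densFn (P.f i) (P.u i) w * expE ((-2:EReal) * Φ w) * k ≤
          densFn (P.f i) (P.u i) w * expE ((-2:EReal) * Ψ w) := by
        intro w hw
        have h1 : Ψ w ≤ Φ w + (C₀:EReal) :=
          hΨle w (Metric.ball_subset_ball (min_le_left _ _) hw)
        have h2 : expE ((-2:EReal) * Φ w) * k ≤ expE ((-2:EReal) * Ψ w) := by
          calc expE ((-2:EReal) * Φ w) * k
              = expE ((-2:EReal) * Φ w + ((-2*C₀:ℝ):EReal)) := (zw_expE_add_coe _ _).symm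
            _ = expE ((-2:EReal) * (Φ w + (C₀:EReal))) := by rw [zw_neg_two_mul_add]
            _ ≤ expE ((-2:EReal) * Ψ w) := zw_expE_mono (zw_neg_two_mul_le h1)
        rw [mul_assoc]
        exact mul_le_mul_right h2 _
      have hmono : (∫⁻ w in Metric.ball (P.z i) (min r r'),
            densFn (P.f i) (P.u i) w * expE ((-2:EReal) * Φ w) * k) ≤
          ∫⁻ w in Metric.ball (P.z i) (min r r'),
            densFn (P.f i) (P.u i) w * expE ((-2:EReal) * Ψ w) := by
        refine lintegral_mono_ae ?_
        rw [ae_restrict_iff' measurableSet_ball]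
        exact Filter.Eventually.of_forall hpt
      rw [lintegral_mul_const' k _ hkt] at hmono
      have hle2 : (∫⁻ w in Metric.ball (P.z i) (min r r'),
            densFn (P.f i) (P.u i) w * expE ((-2:EReal) * Ψ w)) ≤
          ∫⁻ w in Metric.ball (P.z i) r',
            densFn (P.f i) (P.u i) w * expE ((-2:EReal) * Ψ w) :=
        lintegral_mono_set (Metric.ball_subset_ball (min_le_right _ _))
      have hfin2 : (∫⁻ w in Metric.ball (P.z i) (min r r'),
          densFn (P.f i) (P.u i) w * expE ((-2:EReal) * Φ w)) * k < ⊤ :=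
        lt_of_le_of_lt (hmono.trans hle2) hfin
      refine lt_top_iff_ne_top.2 (fun htop => ?_)
      rw [htop, ENNReal.top_mul hk0] at hfin2
      exact lt_irrefl _ hfin2
    have heq := hΦ.2.2.2 Ψ hΨneg hge hnot
    intro z hz
    have h1 : (a:EReal) * ψ z ≤ Φ z := by
      rw [← heq z hz]
      exact le_max_right _ _
    have h2 := (zw_mul_le_iff hapos).1 h1
    rw [hadef, inv_inv] at h2
    exact h2
  -- conclusion
  intro z hz
  rcases eq_or_lt_of_le hc0 with hceq | hcpos
  · rw [← hceq, EReal.coe_zero, zero_mul]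
    exact hψ.2 z hz
  · have hΦz0 : Φ z ≤ 0 := hΦ0 z hz
    rcases eq_or_ne (Φ z) ⊥ with hbot | hne
    · have h1 := key (c/2) (by linarith) (by linarith) z hz
      rw [hbot, EReal.coe_mul_bot_of_pos (by exact_mod_cast (by linarith : (0:ℝ) < c/2))] at h1
      rw [le_bot_iff.1 h1]
      exact bot_le
    · have hΦtop : Φ z ≠ ⊤ := fun h => by simp [h] at hΦz0
      have hΦz : Φ z = ((Φ z).toReal : EReal) := (EReal.coe_toReal hΦtop hne).symm
      set t : ℝ := (Φ z).toReal with htdef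
      have ht0 : t ≤ 0 := by
        have := hΦz0
        rw [hΦz] at this
        exact_mod_cast this
      have hψtop : ψ z < ⊤ := hψ.1.2.1 z hz
      rcases eq_or_ne (ψ z) ⊥ with hpb | hpn2
      · rw [hpb]
        exact bot_le
      · have hψz : ψ z = ((ψ z).toReal : EReal) := (EReal.coe_toReal hψtop.ne hpn2).symm
        set s : ℝ := (ψ z).toReal with hsdef
        rw [hψz, hΦz, ← EReal.coe_mul, EReal.coe_le_coe_iff]
        have hreal : ∀ c' : ℝ, 0 < c' → c' < c → s ≤ c' * t := by
          intro c' h1 h2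
          have h3 := key c' h1 h2 z hz
          rw [hψz, hΦz, ← EReal.coe_mul, EReal.coe_le_coe_iff] at h3
          exact h3
        by_contra hcon
        push_neg at hcon
        rcases lt_or_eq_of_le ht0 with htneg | htz
        · have htne : t ≠ 0 := ne_of_lt htneg
          set ε : ℝ := (s - c*t)/(2*(-t)) with hεdef
          have hε : 0 < ε := div_pos (by linarith) (by linarith)
          have hc'pos : 0 < max (c/2) (c - ε) := lt_max_of_lt_left (by linarith)
          have hc'lt : max (c/2) (c - ε) < c := max_lt (by linarith) (by linarith)
          have h3 := hreal _ hc'pos hc'lt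
          have h4 : max (c/2) (c - ε) * t ≤ (c - ε) * t :=
            mul_le_mul_of_nonpos_right (le_max_right _ _) htneg.le
          have hεt : ε * (-t) = (s - c*t)/2 := by
            rw [hεdef]
            field_simp
          have h5 : (c - ε) * t < s := by nlinarith [hεt]
          linarith [h3.trans h4]
        · have h3 := hreal (c/2) (by linarith) (by linarith)
          nlinarith [h3, hcon]
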